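/- In the bad instance for ρ-swap local search for uniform-opening-cost-perturbed facility location with outliers: let z > ρ ≥ 1 be integers; the instance has z+1 candidate centres i, i_1, …, i_z with opening costs f_i = ρ and f_{i_ℓ} = 1, and z + z points: z points colocated at i and one point at each i_ℓ; all inter-set distances are some large M > z + ρ; the number of outliers allowed is z. Then the solution S = {i_1,…,i_z} (discarding the z points at i as outliers, cost z) is a local optimum under ρ-swaps (no swap of at most ρ centres in and ρ centres out strictly decreases cost while discarding at most z outliers), while the optimum O = {i} has cost ρ; hence the locality gap is z/ρ. -/

import Mathlib

/-- The bad instance for ρ-swap local search for UFL with outliers and non-uniform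
opening costs.  Centres are `Fin (z+1)`: centre `0 = i` has opening cost `ρ` and
centres `1,…,z` have cost `1`.  Points are `Fin z ⊕ Fin z`: `z` points colocated
at `i` (the `inl`s) and one point at each `i_ℓ` (the `inr`s); all cross distances
are `M > z + ρ`.  With outlier budget `z`: the solution `S = {i_1,…,i_z}`
discarding the points at `i` has cost `z`, it is a local optimum for ρ-swaps,
the solution `{i}` discarding the `B`-points has cost `ρ`, and the locality gap
is `z/ρ`. -/
theorem stmt_11 (z ρ : ℕ) (hρ : 1 ≤ ρ) (hzρ : ρ < z) (M : ℝ)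
    (hM : (z : ℝ) + (ρ : ℝ) < M)
    (f : Fin (z+1) → ℝ)
    (hf : ∀ c, f c = if c = 0 then (ρ : ℝ) else 1)
    (d : (Fin z ⊕ Fin z) → Fin (z+1) → ℝ)
    (hdA : ∀ (p : Fin z) (c : Fin (z+1)), d (Sum.inl p) c = if c = 0 then 0 else M)
    (hdB : ∀ (p : Fin z) (c : Fin (z+1)),
      d (Sum.inr p) c = if (c : ℕ) = (p : ℕ) + 1 then 0 else M)
    (cost : Finset (Fin (z+1)) → Finset (Fin z ⊕ Fin z) → ℝ)
    (hcost : ∀ (Cset : Finset (Fin (z+1))) (Z : Finset (Fin z ⊕ Fin z))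
      (hC : Cset.Nonempty),
      cost Cset Z = (∑ p ∈ Finset.univ \ Z, Cset.inf' hC (fun c => d p c))
        + ∑ c ∈ Cset, f c)
    (S : Finset (Fin (z+1))) (hS : S = Finset.univ \ {0})
    (ZS : Finset (Fin z ⊕ Fin z)) (hZS : ZS = Finset.univ.image Sum.inl)
    (ZO : Finset (Fin z ⊕ Fin z)) (hZO : ZO = Finset.univ.image Sum.inr) :
    cost S ZS = z ∧
    (∀ (C' : Finset (Fin (z+1))) (Z' : Finset (Fin z ⊕ Fin z)), C'.Nonempty →
      (S \ C').card ≤ ρ → (C' \ S).card ≤ ρ → Z'.card ≤ z →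
      cost S ZS ≤ cost C' Z') ∧
    cost {0} ZO = ρ ∧
    cost S ZS / cost {0} ZO = (z : ℝ) / (ρ : ℝ) := by
  have hz1 : 1 ≤ z := le_of_lt (lt_of_le_of_lt hρ hzρ)
  have hρ0 : (0:ℝ) ≤ (ρ:ℝ) := Nat.cast_nonneg ρ
  have hz0 : (0:ℝ) ≤ (z:ℝ) := Nat.cast_nonneg z
  have hM0 : (0:ℝ) < M := lt_of_le_of_lt (by positivity) hM
  have hd01 : ∀ p c, d p c = 0 ∨ d p c = M := by
    intro p c
    cases p with
    | inl q => rw [hdA]; split_ifs <;> simp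
    | inr q => rw [hdB]; split_ifs <;> simp
  have hdnn : ∀ p c, 0 ≤ d p c := by
    intro p c; rcases hd01 p c with h | h <;> rw [h]
    exact hM0.le
  have hfnn : ∀ c, 0 ≤ f c := by
    intro c; rw [hf]; split_ifs
    · exact hρ0
    · norm_num
  have hScard : S.card = z := by
    rw [hS, Finset.card_sdiff_of_subset (by simp)]
    simp
  have hSne : S.Nonempty := by
    rw [← Finset.card_pos, hScard]; omega
  have hmemS : ∀ c : Fin (z+1), c ∈ S ↔ c ≠ 0 := by
    intro c; rw [hS]; simp
  -- sum of f over S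
  have hSfsum : ∑ c ∈ S, f c = (z:ℝ) := by
    rw [Finset.sum_congr rfl (fun c hc => by
      rw [hf, if_neg ((hmemS c).1 hc)])]
    rw [Finset.sum_const, hScard]
    simp
  -- cost S ZS = z
  have hcostS : cost S ZS = (z:ℝ) := by
    rw [hcost S ZS hSne]
    have hsplit : (Finset.univ : Finset (Fin z ⊕ Fin z)) \ ZS
        = Finset.univ.image Sum.inr := by
      rw [hZS]; ext p; cases p <;> simp
    have hinf0 : ∀ q : Fin z, S.inf' hSne (fun c => d (Sum.inr q) c) = 0 := by
      intro q
      have hqlt : (q:ℕ) + 1 < z + 1 := by omega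
      set c₀ : Fin (z+1) := ⟨(q:ℕ)+1, hqlt⟩ with hc₀
      have hc₀S : c₀ ∈ S := by
        rw [hmemS]
        simp [hc₀, Fin.ext_iff]
      apply le_antisymm
      · calc S.inf' hSne (fun c => d (Sum.inr q) c) ≤ d (Sum.inr q) c₀ :=
              Finset.inf'_le _ hc₀S
          _ = 0 := by rw [hdB]; simp [hc₀]
      · exact Finset.le_inf' _ _ (fun c _ => hdnn _ c)
    rw [hsplit, Finset.sum_image (fun a _ b _ h => Sum.inr_injective h)]
    rw [Finset.sum_congr rfl (fun q _ => hinf0 q)]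
    simp [hSfsum]
  -- cost {0} ZO = ρ
  have h0ne : ({0} : Finset (Fin (z+1))).Nonempty := ⟨0, Finset.mem_singleton_self 0⟩
  have hcostO : cost ({0} : Finset (Fin (z+1))) ZO = (ρ:ℝ) := by
    rw [hcost _ ZO h0ne]
    have hsplit : (Finset.univ : Finset (Fin z ⊕ Fin z)) \ ZO
        = Finset.univ.image Sum.inl := by
      rw [hZO]; ext p; cases p <;> simp
    rw [hsplit, Finset.sum_image (fun a _ b _ h => Sum.inl_injective h)]
    have : ∀ q : Fin z, ({0} : Finset (Fin (z+1))).inf' h0ne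
        (fun c => d (Sum.inl q) c) = 0 := by
      intro q
      rw [Finset.inf'_singleton, hdA, if_pos rfl]
    rw [Finset.sum_congr rfl (fun q _ => this q)]
    simp [hf]
  have hρne : (ρ:ℝ) ≠ 0 := by
    positivity
  refine ⟨hcostS, ?_, hcostO, by rw [hcostS, hcostO]⟩
  -- local optimality
  intro C' Z' hC' hout hin hZcard
  rw [hcostS, hcost C' Z' hC']
  have hinfnn : ∀ p : Fin z ⊕ Fin z, 0 ≤ C'.inf' hC' (fun c => d p c) :=
    fun p => Finset.le_inf' _ _ (fun c _ => hdnn p c)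
  by_cases hcov : ∀ p ∈ (Finset.univ : Finset (Fin z ⊕ Fin z)) \ Z',
      ∃ c ∈ C', d p c = 0
  · -- every served point is at distance 0; bound by opening costs
    have hsumnn : 0 ≤ ∑ p ∈ Finset.univ \ Z', C'.inf' hC' (fun c => d p c) :=
      Finset.sum_nonneg (fun p _ => hinfnn p)
    have hfz : (z:ℝ) ≤ ∑ c ∈ C', f c := by
      by_cases h0 : (0 : Fin (z+1)) ∈ C'
      · -- centre 0 open; C' must still contain ≥ z - ρ small centres
        have hkey : (S \ C').card + (S ∩ C').card = S.card :=
          Finset.card_sdiff_add_card_inter S C'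
        have hk : z ≤ ρ + (S ∩ C').card := by omega
        have hsub : insert 0 (S ∩ C') ⊆ C' := by
          intro c hc
          rcases Finset.mem_insert.1 hc with rfl | hc
          · exact h0
          · exact (Finset.mem_inter.1 hc).2
        have h0not : (0 : Fin (z+1)) ∉ S ∩ C' := by
          intro h
          exact ((hmemS 0).1 (Finset.mem_inter.1 h).1) rfl
        have hins : ∑ c ∈ insert 0 (S ∩ C'), f c
            = (ρ:ℝ) + ((S ∩ C').card : ℝ) := by
          rw [Finset.sum_insert h0not]
          congr 1
          · rw [hf]; simp
          · rw [Finset.sum_congr rfl (fun c hc => by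
              rw [hf, if_neg ((hmemS c).1 (Finset.mem_inter.1 hc).1)])]
            simp
        calc (z:ℝ) ≤ (ρ:ℝ) + ((S ∩ C').card : ℝ) := by
              exact_mod_cast Nat.cast_le.2 hk
          _ = ∑ c ∈ insert 0 (S ∩ C'), f c := hins.symm
          _ ≤ ∑ c ∈ C', f c :=
              Finset.sum_le_sum_of_subset_of_nonneg hsub (fun c _ _ => hfnn c)
      · -- centre 0 closed: all inl points are outliers, so Z' is exactly them
        have hA : ∀ q : Fin z, Sum.inl q ∈ Z' := by
          intro q; by_contra hq
          obtain ⟨c, hc, hc0⟩ := hcov (Sum.inl q) (by simp [hq])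
          rw [hdA] at hc0
          split_ifs at hc0 with h
          · exact h0 (h ▸ hc)
          · exact hM0.ne' hc0
        have himg : (Finset.univ.image Sum.inl : Finset (Fin z ⊕ Fin z)) ⊆ Z' := by
          intro p hp
          obtain ⟨q, _, rfl⟩ := Finset.mem_image.1 hp
          exact hA q
        have hZ'eq : Finset.univ.image Sum.inl = Z' := by
          apply Finset.eq_of_subset_of_card_le himg
          rwa [Finset.card_image_of_injective _ Sum.inl_injective, Finset.card_univ,
            Fintype.card_fin]
        have hSsub : S ⊆ C' := by
          intro c hc
          have hc0 : (c:ℕ) ≠ 0 := by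
            have := (hmemS c).1 hc
            exact fun h => this (Fin.ext (by simp [h]))
          have hclt : (c:ℕ) < z + 1 := c.isLt
          set q : Fin z := ⟨(c:ℕ) - 1, by omega⟩ with hqdef
          have hq : Sum.inr q ∉ Z' := by
            rw [← hZ'eq]; simp
          obtain ⟨c', hc', h0'⟩ := hcov (Sum.inr q) (by simp [hq])
          rw [hdB] at h0'
          split_ifs at h0' with h
          · have : c' = c := by
              apply Fin.ext
              rw [h]; simp [hqdef]; omega
            exact this ▸ hc'
          · exact absurd h0' hM0.ne'
        calc (z:ℝ) = ∑ c ∈ S, f c := hSfsum.symm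
          _ ≤ ∑ c ∈ C', f c :=
              Finset.sum_le_sum_of_subset_of_nonneg hSsub (fun c _ _ => hfnn c)
    linarith
  · -- some served point is far: cost ≥ M > z
    push_neg at hcov
    obtain ⟨p, hp, hpc⟩ := hcov
    have hinfM : M ≤ C'.inf' hC' (fun c => d p c) := by
      apply Finset.le_inf'
      intro c hc
      rcases hd01 p c with h | h
      · exact absurd h (hpc c hc)
      · rw [h]
    have hsum : M ≤ ∑ q ∈ Finset.univ \ Z', C'.inf' hC' (fun c => d q c) :=
      le_trans hinfM (Finset.single_le_sum (fun q _ => hinfnn q) hp)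
    have hfsum : 0 ≤ ∑ c ∈ C', f c := Finset.sum_nonneg (fun c _ => hfnn c)
    linarith
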